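/- The sum of the eight basis conjugations of X extracts the two real (non-imaginary) components scaled by 8: for every X in A, X − ∑_{i=1}^{6} eᵢ·(X·eᵢ) + e₇·(X·e₇) = (8·(X 0)) • e₀ + (8·(X 7)) • e₇. -/

import Mathlib

noncomputable section

/-- Standard basis vectors of `A := Fin 8 → ℝ`: `e i j = 1` if `i = j`, else `0`. -/
def e (i : Fin 8) : Fin 8 → ℝ := fun j => if i = j then 1 else 0

/-- The octonion-like (split-biquaternion) product on `Fin 8 → ℝ`: the unique bilinear
multiplication determined by the multiplication table on the basis `e 0, …, e 7`
(with `e 0` the two-sided identity, `e 7 · e 7 = e 0`, `e i · e i = -e 0` for `1 ≤ i ≤ 6`, etc.),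
written out in coordinates. -/
def omul (X Y : Fin 8 → ℝ) : Fin 8 → ℝ :=
  ![X 0*Y 0 - X 1*Y 1 - X 2*Y 2 - X 3*Y 3 - X 4*Y 4 - X 5*Y 5 - X 6*Y 6 + X 7*Y 7,
    X 1*Y 0 + X 0*Y 1 - X 3*Y 2 + X 2*Y 3 + X 5*Y 4 - X 4*Y 5 - X 7*Y 6 - X 6*Y 7,
    X 2*Y 0 + X 3*Y 1 + X 0*Y 2 - X 1*Y 3 - X 6*Y 4 - X 7*Y 5 + X 4*Y 6 - X 5*Y 7,
    X 3*Y 0 - X 2*Y 1 + X 1*Y 2 + X 0*Y 3 - X 7*Y 4 + X 6*Y 5 - X 5*Y 6 - X 4*Y 7,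
    X 4*Y 0 - X 5*Y 1 + X 6*Y 2 - X 7*Y 3 + X 0*Y 4 + X 1*Y 5 - X 2*Y 6 - X 3*Y 7,
    X 5*Y 0 + X 4*Y 1 - X 7*Y 2 - X 6*Y 3 - X 1*Y 4 + X 0*Y 5 + X 3*Y 6 - X 2*Y 7,
    X 6*Y 0 - X 7*Y 1 - X 4*Y 2 + X 5*Y 3 + X 2*Y 4 - X 3*Y 5 + X 0*Y 6 - X 1*Y 7,
    X 7*Y 0 + X 6*Y 1 + X 5*Y 2 + X 4*Y 3 + X 3*Y 4 + X 2*Y 5 + X 1*Y 6 + X 0*Y 7]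

/-- The conjugate (reverse) of `X`: negate the six imaginary coordinates `1,…,6`. -/
def oconj (X : Fin 8 → ℝ) : Fin 8 → ℝ :=
  ![X 0, -X 1, -X 2, -X 3, -X 4, -X 5, -X 6, X 7]

/-- `a(X) = ∑ i, (X i)²`. -/
def aQ (X : Fin 8 → ℝ) : ℝ := ∑ i, (X i)^2

/-- `b(X) = 2 X₀X₇ − 2 (X₁X₆ + X₂X₅ + X₃X₄)`. -/
def bQ (X : Fin 8 → ℝ) : ℝ := 2*(X 0)*(X 7) - 2*((X 1)*(X 6) + (X 2)*(X 5) + (X 3)*(X 4))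

/-- Squared seminorm `N_λ(X) = a(X) + λ·b(X)` (used with `λ = 1` and `λ = -1`). -/
def Nsq (lam : ℝ) (X : Fin 8 → ℝ) : ℝ := aQ X + lam * bQ X

/-- Matrix of left multiplication by `X`: column `j` is the coordinate vector of `X · eⱼ`. -/
def MX (X : Fin 8 → ℝ) : Matrix (Fin 8) (Fin 8) ℝ := Matrix.of fun i j => omul X (e j) i

/-- Matrix of right multiplication by `X`: column `j` is the coordinate vector of `eⱼ · X`. -/
def PX (X : Fin 8 → ℝ) : Matrix (Fin 8) (Fin 8) ℝ := Matrix.of fun i j => omul (e j) X i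

/-- The matrix `J` with `J 0 7 = J 7 0 = 1`, `J i (7-i) = -1` for `1 ≤ i ≤ 6`, else `0`. -/
def J : Matrix (Fin 8) (Fin 8) ℝ :=
  !![0, 0, 0, 0, 0, 0, 0, 1;
     0, 0, 0, 0, 0, 0, -1, 0;
     0, 0, 0, 0, 0, -1, 0, 0;
     0, 0, 0, 0, -1, 0, 0, 0;
     0, 0, 0, -1, 0, 0, 0, 0;
     0, 0, -1, 0, 0, 0, 0, 0;
     0, -1, 0, 0, 0, 0, 0, 0;
     1, 0, 0, 0, 0, 0, 0, 0]




lemma vec8_2 {α : Type*} (a0 a1 a2 a3 a4 a5 a6 a7 : α) :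
    ![a0,a1,a2,a3,a4,a5,a6,a7] 2 = a2 := rfl
lemma vec8_3 {α : Type*} (a0 a1 a2 a3 a4 a5 a6 a7 : α) :
    ![a0,a1,a2,a3,a4,a5,a6,a7] 3 = a3 := rfl
lemma vec8_4 {α : Type*} (a0 a1 a2 a3 a4 a5 a6 a7 : α) :
    ![a0,a1,a2,a3,a4,a5,a6,a7] 4 = a4 := rfl
lemma vec8_5 {α : Type*} (a0 a1 a2 a3 a4 a5 a6 a7 : α) :
    ![a0,a1,a2,a3,a4,a5,a6,a7] 5 = a5 := rfl
lemma vec8_6 {α : Type*} (a0 a1 a2 a3 a4 a5 a6 a7 : α) :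
    ![a0,a1,a2,a3,a4,a5,a6,a7] 6 = a6 := rfl
lemma vec8_7 {α : Type*} (a0 a1 a2 a3 a4 a5 a6 a7 : α) :
    ![a0,a1,a2,a3,a4,a5,a6,a7] 7 = a7 := rfl

lemma fmk2 (h : 2 < 8) : (⟨2, h⟩ : Fin 8) = 2 := rfl
lemma fmk3 (h : 3 < 8) : (⟨3, h⟩ : Fin 8) = 3 := rfl
lemma fmk4 (h : 4 < 8) : (⟨4, h⟩ : Fin 8) = 4 := rfl
lemma fmk5 (h : 5 < 8) : (⟨5, h⟩ : Fin 8) = 5 := rfl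
lemma fmk6 (h : 6 < 8) : (⟨6, h⟩ : Fin 8) = 6 := rfl
lemma fmk7 (h : 7 < 8) : (⟨7, h⟩ : Fin 8) = 7 := rfl

lemma ecoord (i j : Fin 8) : e i j = if i = j then 1 else 0 := rfl

lemma R1' (X : Fin 8 → ℝ) : omul X (e 1) = ![-X 1, X 0, X 3, -X 2, -X 5, X 4, -X 7, X 6] := by
  funext j; fin_cases j <;>
    simp (config := { decide := true }) only [omul, ecoord, Matrix.cons_val_zero,
      Matrix.cons_val_one, Matrix.head_cons, vec8_4, vec8_5, vec8_6, vec8_7, if_true, if_false, ite_true, ite_false] <;>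
    norm_num

lemma R2' (X : Fin 8 → ℝ) : omul X (e 2) = ![-X 2, -X 3, X 0, X 1, X 6, -X 7, -X 4, X 5] := by
  funext j; fin_cases j <;>
    simp (config := { decide := true }) only [omul, ecoord, Matrix.cons_val_zero,
      Matrix.cons_val_one, Matrix.head_cons, vec8_4, vec8_5, vec8_6, vec8_7, if_true, if_false, ite_true, ite_false] <;>
    norm_num

lemma R3' (X : Fin 8 → ℝ) : omul X (e 3) = ![-X 3, X 2, -X 1, X 0, -X 7, -X 6, X 5, X 4] := by
  funext j; fin_cases j <;>
    simp (config := { decide := true }) only [omul, ecoord, Matrix.cons_val_zero,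
      Matrix.cons_val_one, Matrix.head_cons, vec8_4, vec8_5, vec8_6, vec8_7, if_true, if_false, ite_true, ite_false] <;>
    norm_num

lemma R4' (X : Fin 8 → ℝ) : omul X (e 4) = ![-X 4, X 5, -X 6, -X 7, X 0, -X 1, X 2, X 3] := by
  funext j; fin_cases j <;>
    simp (config := { decide := true }) only [omul, ecoord, Matrix.cons_val_zero,
      Matrix.cons_val_one, Matrix.head_cons, vec8_4, vec8_5, vec8_6, vec8_7, if_true, if_false, ite_true, ite_false] <;>
    norm_num

lemma R5' (X : Fin 8 → ℝ) : omul X (e 5) = ![-X 5, -X 4, -X 7, X 6, X 1, X 0, -X 3, X 2] := by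
  funext j; fin_cases j <;>
    simp (config := { decide := true }) only [omul, ecoord, Matrix.cons_val_zero,
      Matrix.cons_val_one, Matrix.head_cons, vec8_4, vec8_5, vec8_6, vec8_7, if_true, if_false, ite_true, ite_false] <;>
    norm_num

lemma R6' (X : Fin 8 → ℝ) : omul X (e 6) = ![-X 6, -X 7, X 4, -X 5, -X 2, X 3, X 0, X 1] := by
  funext j; fin_cases j <;>
    simp (config := { decide := true }) only [omul, ecoord, Matrix.cons_val_zero,
      Matrix.cons_val_one, Matrix.head_cons, vec8_4, vec8_5, vec8_6, vec8_7, if_true, if_false, ite_true, ite_false] <;>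
    norm_num

lemma R7' (X : Fin 8 → ℝ) : omul X (e 7) = ![X 7, -X 6, -X 5, -X 4, -X 3, -X 2, -X 1, X 0] := by
  funext j; fin_cases j <;>
    simp (config := { decide := true }) only [omul, ecoord, Matrix.cons_val_zero,
      Matrix.cons_val_one, Matrix.head_cons, vec8_4, vec8_5, vec8_6, vec8_7, if_true, if_false, ite_true, ite_false] <;>
    norm_num

lemma C1' (X : Fin 8 → ℝ) : omul (e 1) (omul X (e 1)) = ![-X 0, -X 1, X 2, X 3, X 4, X 5, -X 6, -X 7] := by
  rw [R1']
  funext j; fin_cases j <;>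
    simp (config := { decide := true }) only [omul, ecoord, Matrix.cons_val_zero,
      Matrix.cons_val_one, Matrix.head_cons, vec8_4, vec8_5, vec8_6, vec8_7, if_true, if_false, ite_true, ite_false] <;>
    norm_num [vec8_2, vec8_3]

lemma C2' (X : Fin 8 → ℝ) : omul (e 2) (omul X (e 2)) = ![-X 0, X 1, -X 2, X 3, X 4, -X 5, X 6, -X 7] := by
  rw [R2']
  funext j; fin_cases j <;>
    simp (config := { decide := true }) only [omul, ecoord, Matrix.cons_val_zero,
      Matrix.cons_val_one, Matrix.head_cons, vec8_4, vec8_5, vec8_6, vec8_7, if_true, if_false, ite_true, ite_false] <;>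
    norm_num [vec8_2, vec8_3]

lemma C3' (X : Fin 8 → ℝ) : omul (e 3) (omul X (e 3)) = ![-X 0, X 1, X 2, -X 3, -X 4, X 5, X 6, -X 7] := by
  rw [R3']
  funext j; fin_cases j <;>
    simp (config := { decide := true }) only [omul, ecoord, Matrix.cons_val_zero,
      Matrix.cons_val_one, Matrix.head_cons, vec8_4, vec8_5, vec8_6, vec8_7, if_true, if_false, ite_true, ite_false] <;>
    norm_num [vec8_2, vec8_3]

lemma C4' (X : Fin 8 → ℝ) : omul (e 4) (omul X (e 4)) = ![-X 0, X 1, X 2, -X 3, -X 4, X 5, X 6, -X 7] := by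
  rw [R4']
  funext j; fin_cases j <;>
    simp (config := { decide := true }) only [omul, ecoord, Matrix.cons_val_zero,
      Matrix.cons_val_one, Matrix.head_cons, vec8_4, vec8_5, vec8_6, vec8_7, if_true, if_false, ite_true, ite_false] <;>
    norm_num [vec8_2, vec8_3]

lemma C5' (X : Fin 8 → ℝ) : omul (e 5) (omul X (e 5)) = ![-X 0, X 1, -X 2, X 3, X 4, -X 5, X 6, -X 7] := by
  rw [R5']
  funext j; fin_cases j <;>
    simp (config := { decide := true }) only [omul, ecoord, Matrix.cons_val_zero,
      Matrix.cons_val_one, Matrix.head_cons, vec8_4, vec8_5, vec8_6, vec8_7, if_true, if_false, ite_true, ite_false] <;>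
    norm_num [vec8_2, vec8_3]

lemma C6' (X : Fin 8 → ℝ) : omul (e 6) (omul X (e 6)) = ![-X 0, -X 1, X 2, X 3, X 4, X 5, -X 6, -X 7] := by
  rw [R6']
  funext j; fin_cases j <;>
    simp (config := { decide := true }) only [omul, ecoord, Matrix.cons_val_zero,
      Matrix.cons_val_one, Matrix.head_cons, vec8_4, vec8_5, vec8_6, vec8_7, if_true, if_false, ite_true, ite_false] <;>
    norm_num [vec8_2, vec8_3]

lemma C7' (X : Fin 8 → ℝ) : omul (e 7) (omul X (e 7)) = ![X 0, X 1, X 2, X 3, X 4, X 5, X 6, X 7] := by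
  rw [R7']
  funext j; fin_cases j <;>
    simp (config := { decide := true }) only [omul, ecoord, Matrix.cons_val_zero,
      Matrix.cons_val_one, Matrix.head_cons, vec8_4, vec8_5, vec8_6, vec8_7, if_true, if_false, ite_true, ite_false] <;>
    norm_num [vec8_2, vec8_3]

/-- The sum of the eight basis conjugations of `X` equals `8·X₀ • e₀ + 8·X₇ • e₇`. -/
theorem sum_basis_conjugations (X : Fin 8 → ℝ) :
    X - (omul (e 1) (omul X (e 1)) + omul (e 2) (omul X (e 2)) + omul (e 3) (omul X (e 3)) +
         omul (e 4) (omul X (e 4)) + omul (e 5) (omul X (e 5)) + omul (e 6) (omul X (e 6))) +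
      omul (e 7) (omul X (e 7)) = (8 * X 0) • e 0 + (8 * X 7) • e 7 := by
  rw [C1', C2', C3', C4', C5', C6', C7']
  funext j
  fin_cases j <;>
    simp (config := { decide := true }) only [Pi.add_apply, Pi.sub_apply, Pi.smul_apply,
      smul_eq_mul, ecoord, Matrix.cons_val_zero, Matrix.cons_val_one, Matrix.head_cons,
      vec8_4, vec8_5, vec8_6, vec8_7, fmk2, fmk3, fmk4, fmk5, fmk6, fmk7,
      if_true, if_false, ite_true, ite_false] <;>
    norm_num [fmk2, fmk3, fmk4, fmk5, fmk6, fmk7, vec8_2, vec8_3] <;> ring
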